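/- For q-pebbling on the path P_n with n ≥ 1 vertices, the pebbling number is q^{n-1}: every configuration of q^{n-1} pebbles on P_n is solvable, and placing q^{n-1} - 1 pebbles on one endpoint is not solvable (it cannot reach the other endpoint) when n ≥ 2. -/

import Mathlib

/-- A `q`-pebbling move: remove `q` pebbles from a vertex `u` (which has at least `q`
pebbles) and add one pebble to a neighbour `u'`. -/
def PebStep {V : Type*} [DecidableEq V] (q : ℕ) (G : SimpleGraph V) (D D' : V → ℕ) : Prop :=
  ∃ u u', G.Adj u u' ∧ q ≤ D u ∧
    D' = fun w => if w = u then D u - q else if w = u' then D u' + 1 else D w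

/-- A configuration `D` is `v`-solvable if a finite sequence of `q`-pebbling moves
places a pebble on `v`. -/
def Solvable {V : Type*} [DecidableEq V] (q : ℕ) (G : SimpleGraph V) (D : V → ℕ) (v : V) : Prop :=
  ∃ D', Relation.ReflTransGen (PebStep q G) D D' ∧ 1 ≤ D' v

/-- perform `t` moves from `u` to `u'`. -/
lemma peb_moves {V : Type*} [DecidableEq V] (q : ℕ) {G : SimpleGraph V}
    {u u' : V} (h : G.Adj u u') :
    ∀ (t : ℕ) (D : V → ℕ), t * q ≤ D u →
      ∃ E, Relation.ReflTransGen (PebStep q G) D E ∧ E u' = D u' + t ∧ E u = D u - t * q ∧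
        ∀ w, w ≠ u → w ≠ u' → E w = D w := by
  intro t
  induction t with
  | zero => intro D _; exact ⟨D, .refl, by simp, by simp, fun _ _ _ => rfl⟩
  | succ t ih =>
    intro D hD
    have hne : u' ≠ u := h.ne'
    have hmul : (t + 1) * q = t * q + q := Nat.succ_mul t q
    set D₁ : V → ℕ := fun w => if w = u then D u - q else if w = u' then D u' + 1 else D w
      with hD₁
    have hq' : q ≤ D u := by omega
    have hstep : PebStep q G D D₁ := ⟨u, u', h, hq', rfl⟩
    have h1 : D₁ u = D u - q := by simp [hD₁]
    have h2 : D₁ u' = D u' + 1 := by simp [hD₁, hne]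
    have hle : t * q ≤ D₁ u := by rw [h1]; omega
    obtain ⟨E, hchain, he1, he2, he3⟩ := ih D₁ hle
    refine ⟨E, .head hstep hchain, ?_, ?_, ?_⟩
    · rw [he1, h2]; omega
    · rw [he2, h1]; omega
    · intro w hw hw'; rw [he3 w hw hw', hD₁]; simp [hw, hw']

/-- greedy reach lemma: if the weighted sum of pebbles on `0..k` is at least `m * q^k`,
we can get `m` pebbles onto vertex `k`, without touching vertices beyond `k`. -/
lemma reach (n q : ℕ) (hq : 2 ≤ q) :
    ∀ (k : ℕ) (hk : k < n) (D : Fin n → ℕ) (m : ℕ),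
      m * q ^ k ≤ ∑ i ∈ Finset.range (k + 1), q ^ i * (if h : i < n then D ⟨i, h⟩ else 0) →
      ∃ E, Relation.ReflTransGen (PebStep q (SimpleGraph.pathGraph n)) D E ∧
        m ≤ E ⟨k, hk⟩ ∧ ∀ j : Fin n, k < (j : ℕ) → E j = D j := by
  intro k
  induction k with
  | zero =>
    intro hk D m hsum
    refine ⟨D, .refl, ?_, fun _ _ => rfl⟩
    simpa [hk] using hsum
  | succ k ih =>
    intro hk D m hsum
    by_cases hm : m ≤ D ⟨k + 1, hk⟩
    · exact ⟨D, .refl, hm, fun _ _ => rfl⟩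
    push_neg at hm
    have hk' : k < n := by omega
    set d := D ⟨k + 1, hk⟩ with hd
    set r := m - d with hr
    rw [Finset.sum_range_succ] at hsum
    have hdd : (if h : k + 1 < n then D ⟨k + 1, h⟩ else 0) = d := by rw [dif_pos hk]
    rw [hdd] at hsum
    set S := ∑ i ∈ Finset.range (k + 1), q ^ i * (if h : i < n then D ⟨i, h⟩ else 0) with hS
    have hmrd : m = r + d := by omega
    have e1 : m * q ^ (k + 1) = r * q ^ (k + 1) + q ^ (k + 1) * d := by
      rw [hmrd, add_mul, mul_comm (q ^ (k + 1))]
    rw [e1] at hsum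
    have hsum' : (r * q) * q ^ k ≤ S := by
      have : r * q * q ^ k = r * q ^ (k + 1) := by ring
      rw [this]; exact le_of_add_le_add_right hsum
    obtain ⟨E₁, hch₁, hE₁, hpres₁⟩ := ih hk' D (r * q) hsum'
    have hadj : (SimpleGraph.pathGraph n).Adj ⟨k, hk'⟩ ⟨k + 1, hk⟩ := by
      rw [SimpleGraph.pathGraph_adj]; left; rfl
    obtain ⟨E₂, hch₂, he1, he2, he3⟩ := peb_moves q hadj r E₁ hE₁
    refine ⟨E₂, hch₁.trans hch₂, ?_, ?_⟩
    · rw [he1, hpres₁ ⟨k + 1, hk⟩ (by simp)]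
      omega
    · intro j hj
      rw [he3 j (Fin.ne_of_val_ne (show (j : ℕ) ≠ k by omega))
        (Fin.ne_of_val_ne (show (j : ℕ) ≠ k + 1 by omega))]
      exact hpres₁ j (by omega)

def flipFin (n : ℕ) (i : Fin n) : Fin n := ⟨n - 1 - i, by have := i.isLt; omega⟩

lemma flipFin_flipFin (n : ℕ) (i : Fin n) : flipFin n (flipFin n i) = i := by
  have := i.isLt
  apply Fin.ext
  simp only [flipFin]
  omega

lemma flip_adj {n : ℕ} {u v : Fin n} (h : (SimpleGraph.pathGraph n).Adj u v) :
    (SimpleGraph.pathGraph n).Adj (flipFin n u) (flipFin n v) := by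
  rw [SimpleGraph.pathGraph_adj] at h ⊢
  have hu := u.isLt; have hv := v.isLt
  simp only [flipFin]
  omega

lemma flipFin_eq_iff {n : ℕ} (a b : Fin n) : flipFin n a = b ↔ a = flipFin n b := by
  constructor
  · rintro rfl; exact (flipFin_flipFin n a).symm
  · rintro rfl; exact flipFin_flipFin n b

lemma pebstep_flip {n q : ℕ} {D D' : Fin n → ℕ}
    (h : PebStep q (SimpleGraph.pathGraph n) D D') :
    PebStep q (SimpleGraph.pathGraph n) (fun i => D (flipFin n i)) (fun i => D' (flipFin n i)) := by
  obtain ⟨u, u', hadj, hqu, hform⟩ := h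
  refine ⟨flipFin n u, flipFin n u', flip_adj hadj, by simp only [flipFin_flipFin]; exact hqu, ?_⟩
  funext w
  simp only [hform, flipFin_flipFin, flipFin_eq_iff]

lemma weight_mono {n q : ℕ} (hq : 1 ≤ q) {D D' : Fin n → ℕ}
    (h : PebStep q (SimpleGraph.pathGraph n) D D') :
    ∑ w, D' w * q ^ (w : ℕ) ≤ ∑ w, D w * q ^ (w : ℕ) := by
  obtain ⟨u, u', hadj, hqu, hform⟩ := h
  have hne : u' ≠ u := hadj.ne'
  have hterm : ∀ w : Fin n, D' w * q ^ (w : ℕ) + (if w = u then q ^ ((u : ℕ) + 1) else 0)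
      = D w * q ^ (w : ℕ) + (if w = u' then q ^ ((u' : ℕ)) else 0) := by
    intro w
    simp only [hform]
    by_cases h1 : w = u
    · subst h1
      rw [if_pos rfl, if_pos rfl, if_neg hne.symm]
      have hD : D w = (D w - q) + q := by omega
      conv_rhs => rw [hD]
      rw [pow_succ]; ring
    · rw [if_neg h1, if_neg h1]
      by_cases h2 : w = u'
      · subst h2
        rw [if_pos rfl, if_pos rfl]; ring
      · rw [if_neg h2, if_neg h2]
  have hsum := Finset.sum_congr rfl (fun w (_ : w ∈ Finset.univ) => hterm w)
  rw [Finset.sum_add_distrib, Finset.sum_add_distrib,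
    Finset.sum_ite_eq' Finset.univ u (fun _ => q ^ ((u : ℕ) + 1)),
    Finset.sum_ite_eq' Finset.univ u' (fun _ => q ^ ((u' : ℕ))),
    if_pos (Finset.mem_univ u), if_pos (Finset.mem_univ u')] at hsum
  have hle : q ^ ((u' : ℕ)) ≤ q ^ ((u : ℕ) + 1) := by
    apply Nat.pow_le_pow_right hq
    rw [SimpleGraph.pathGraph_adj] at hadj
    omega
  omega

/-- the `q`-pebbling number of the path on `n` vertices is `q^{n-1}`:
every configuration of `q^{n-1}` pebbles is solvable, and for `n ≥ 2` the pile of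
`q^{n-1} - 1` pebbles on one endpoint cannot reach the other endpoint. -/
theorem stmt9 (n : ℕ) (hn : 1 ≤ n) (q : ℕ) (hq : 2 ≤ q) :
    (∀ D : Fin n → ℕ, (∑ w, D w) = q ^ (n - 1) →
        ∀ v, Solvable q (SimpleGraph.pathGraph n) D v) ∧
    (2 ≤ n →
      ¬ Solvable q (SimpleGraph.pathGraph n)
          (fun i => if i = (⟨0, by omega⟩ : Fin n) then q ^ (n - 1) - 1 else 0)
          (⟨n - 1, by omega⟩ : Fin n)) := by
  constructor
  · intro D hD v
    have hv := v.isLt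
    set k := (v : ℕ) with hk
    set Df : Fin n → ℕ := fun i => D (flipFin n i) with hDf
    set kf := n - 1 - k with hkf
    have hkfn : kf < n := by omega
    by_cases hA : q ^ k ≤ ∑ i ∈ Finset.range (k + 1), q ^ i * (if h : i < n then D ⟨i, h⟩ else 0)
    · obtain ⟨E, hch, hE, _⟩ := reach n q hq k hv D 1 (by simpa using hA)
      exact ⟨E, hch, by simpa using hE⟩
    by_cases hB : q ^ kf ≤ ∑ i ∈ Finset.range (kf + 1), q ^ i * (if h : i < n then Df ⟨i, h⟩ else 0)
    · obtain ⟨E, hch, hE, _⟩ := reach n q hq kf hkfn Df 1 (by simpa using hB)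
      have hch' : Relation.ReflTransGen (PebStep q (SimpleGraph.pathGraph n))
          (fun i => Df (flipFin n i)) (fun i => E (flipFin n i)) :=
        Relation.ReflTransGen.lift (fun F => fun i => F (flipFin n i))
          (fun _ _ hs => pebstep_flip hs) _ _ hch
      have hDfD : (fun i => Df (flipFin n i)) = D := by
        funext i; simp only [hDf, flipFin_flipFin]
      rw [hDfD] at hch'
      refine ⟨fun i => E (flipFin n i), hch', ?_⟩
      show 1 ≤ E (flipFin n v)
      have : flipFin n v = ⟨kf, hkfn⟩ := rfl
      rw [this]; exact hE
    · exfalso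
      push_neg at hA hB
      have htot : ∑ i ∈ Finset.range n, (if h : i < n then D ⟨i, h⟩ else 0) = q ^ (n - 1) := by
        rw [← hD, ← Fin.sum_univ_eq_sum_range (fun i => if h : i < n then D ⟨i, h⟩ else 0)]
        apply Finset.sum_congr rfl
        intro w _
        simp
      -- sum of unweighted ≤ weighted
      have hA' : ∑ i ∈ Finset.range (k + 1), (if h : i < n then D ⟨i, h⟩ else 0) ≤
          ∑ i ∈ Finset.range (k + 1), q ^ i * (if h : i < n then D ⟨i, h⟩ else 0) :=
        Finset.sum_le_sum fun i _ => Nat.le_mul_of_pos_left _ (Nat.pos_of_ne_zero (pow_ne_zero i (by omega)))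
      have hB' : ∑ i ∈ Finset.range (kf + 1), (fun i => if h : i < n then Df ⟨i, h⟩ else 0) i ≤
          ∑ i ∈ Finset.range (kf + 1), q ^ i * (if h : i < n then Df ⟨i, h⟩ else 0) :=
        Finset.sum_le_sum fun i _ => Nat.le_mul_of_pos_left _ (Nat.pos_of_ne_zero (pow_ne_zero i (by omega)))
      -- reindex flipped sum
      have hre : ∑ i ∈ Finset.range (kf + 1), (if h : i < n then Df ⟨i, h⟩ else 0)
          = ∑ i ∈ Finset.Ico k n, (if h : i < n then D ⟨i, h⟩ else 0) := by
        apply Finset.sum_bij' (fun (j : ℕ) (_ : j ∈ Finset.range (kf + 1)) => n - 1 - j)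
          (fun (i : ℕ) (_ : i ∈ Finset.Ico k n) => n - 1 - i)
        · intro a ha
          simp only [Finset.mem_range] at ha
          simp only [Finset.mem_Ico]
          omega
        · intro a ha
          simp only [Finset.mem_Ico] at ha
          simp only [Finset.mem_range]
          omega
        · intro a ha
          simp only [Finset.mem_range] at ha
          omega
        · intro a ha
          simp only [Finset.mem_Ico] at ha
          omega
        · intro a ha
          simp only [Finset.mem_range] at ha
          have h1 : a < n := by omega
          have h2 : n - 1 - a < n := by omega
          rw [dif_pos h1, dif_pos h2]
          simp only [hDf, flipFin]
      have hsplit : ∑ i ∈ Finset.range k, (if h : i < n then D ⟨i, h⟩ else 0)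
            + ∑ i ∈ Finset.Ico k n, (if h : i < n then D ⟨i, h⟩ else 0)
          = ∑ i ∈ Finset.range n, (if h : i < n then D ⟨i, h⟩ else 0) :=
        Finset.sum_range_add_sum_Ico (fun i => if h : i < n then D ⟨i, h⟩ else 0) (by omega)
      have hmono : ∑ i ∈ Finset.range k, (if h : i < n then D ⟨i, h⟩ else 0)
          ≤ ∑ i ∈ Finset.range (k + 1), (if h : i < n then D ⟨i, h⟩ else 0) :=
        Finset.sum_le_sum_of_subset (Finset.range_subset_range.mpr (by omega))
      have hx : 1 ≤ q ^ k := Nat.one_le_pow _ _ (by omega)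
      have hy : 1 ≤ q ^ kf := Nat.one_le_pow _ _ (by omega)
      have hxy : q ^ k * q ^ kf = q ^ (n - 1) := by
        rw [← pow_add]; congr 1; omega
      have hkey : q ^ k + q ^ kf ≤ q ^ (n - 1) + 1 := by nlinarith
      rw [hre] at hB'
      omega
  · intro hn2 hsol
    obtain ⟨E, hch, hE⟩ := hsol
    set v0 : Fin n := ⟨0, by omega⟩ with hv0
    set D0 : Fin n → ℕ := fun i => if i = v0 then q ^ (n - 1) - 1 else 0 with hD0
    have hW0 : ∑ w, D0 w * q ^ (w : ℕ) = q ^ (n - 1) - 1 := by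
      simp only [hD0, ite_mul, zero_mul]
      rw [Finset.sum_ite_eq' Finset.univ v0 (fun w => (q ^ (n - 1) - 1) * q ^ (w : ℕ)),
        if_pos (Finset.mem_univ v0)]
      simp [hv0]
    have hchain_mono : ∀ F, Relation.ReflTransGen (PebStep q (SimpleGraph.pathGraph n)) D0 F →
        ∑ w, F w * q ^ (w : ℕ) ≤ ∑ w, D0 w * q ^ (w : ℕ) := by
      intro F h
      induction h with
      | refl => exact le_rfl
      | tail _ hbc ih => exact le_trans (weight_mono (by omega) hbc) ih
    have h1 := hchain_mono E hch
    rw [hW0] at h1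
    set vl : Fin n := ⟨n - 1, by omega⟩ with hvl
    have h2 : E vl * q ^ ((vl : ℕ)) ≤ ∑ w, E w * q ^ (w : ℕ) :=
      Finset.single_le_sum (f := fun w => E w * q ^ (w : ℕ)) (fun w _ => Nat.zero_le _)
        (Finset.mem_univ vl)
    have h3 : q ^ (n - 1) ≤ E vl * q ^ ((vl : ℕ)) := by
      have : ((vl : ℕ)) = n - 1 := rfl
      rw [this]
      exact Nat.le_mul_of_pos_left _ (by omega)
    have h4 : 1 ≤ q ^ (n - 1) := Nat.one_le_pow _ _ (by omega)
    omega
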